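/- Let X_n and Y_n be sequences of random variables on the same probability space and u_n a sequence of positive numbers. If X_n and Y_n differ by order at least u_n (i.e. there exist c₁, c₂ > 0 with P(|X_n − Y_n| ≥ c₁u_n) ≥ c₂ for all large n) and d_TV(X_n, Y_n) → 0 as n → ∞, then X_n has fluctuations of order at least u_n. -/
import Mathlib


open MeasureTheory Filter

/-- Total variation distance between the laws of two real random variables. -/
noncomputable def dTV {Ω : Type*} [MeasurableSpace Ω] (μ : Measure Ω) (X Y : Ω → ℝ) : ℝ :=
  ⨆ (A : Set ℝ) (_ : MeasurableSet A), |(μ (X ⁻¹' A)).toReal - (μ (Y ⁻¹' A)).toReal|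

/-- `X n` has fluctuations of order at least `u n`. -/
def HasFluctuationsAtLeast {Ω : Type*} [MeasurableSpace Ω] (μ : Measure Ω)
    (X : ℕ → Ω → ℝ) (u : ℕ → ℝ) : Prop :=
  ∃ c₁ > (0:ℝ), ∃ c₂ > (0:ℝ), ∃ N : ℕ, ∀ n ≥ N, ∀ a b : ℝ, a ≤ b → b - a ≤ c₁ * u n →
    (μ {ω | a ≤ X n ω ∧ X n ω ≤ b}).toReal ≤ 1 - c₂

lemma abs_le_dTV {Ω : Type*} [MeasurableSpace Ω] (μ : Measure Ω) [IsProbabilityMeasure μ]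
    (X Y : Ω → ℝ) {A : Set ℝ} (hA : MeasurableSet A) :
    |(μ (X ⁻¹' A)).toReal - (μ (Y ⁻¹' A)).toReal| ≤ dTV μ X Y := by
  have hbdd : BddAbove (Set.range fun A : Set ℝ =>
      ⨆ _ : MeasurableSet A, |(μ (X ⁻¹' A)).toReal - (μ (Y ⁻¹' A)).toReal|) := by
    refine ⟨1, ?_⟩
    rintro x ⟨B, rfl⟩
    refine Real.iSup_le (fun hB => ?_) zero_le_one
    have h1 : (μ (X ⁻¹' B)).toReal ≤ 1 := by
      simpa using ENNReal.toReal_mono ENNReal.one_ne_top (prob_le_one (μ := μ) (s := X ⁻¹' B))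
    have h2 : (μ (Y ⁻¹' B)).toReal ≤ 1 := by
      simpa using ENNReal.toReal_mono ENNReal.one_ne_top (prob_le_one (μ := μ) (s := Y ⁻¹' B))
    have h3 : (0:ℝ) ≤ (μ (X ⁻¹' B)).toReal := ENNReal.toReal_nonneg
    have h4 : (0:ℝ) ≤ (μ (Y ⁻¹' B)).toReal := ENNReal.toReal_nonneg
    rw [abs_le]; constructor <;> linarith
  calc |(μ (X ⁻¹' A)).toReal - (μ (Y ⁻¹' A)).toReal|
      = ⨆ _ : MeasurableSet A, |(μ (X ⁻¹' A)).toReal - (μ (Y ⁻¹' A)).toReal| :=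
        (ciSup_pos (f := fun _ : MeasurableSet A => |(μ (X ⁻¹' A)).toReal - (μ (Y ⁻¹' A)).toReal|) hA).symm
    _ ≤ dTV μ X Y := le_ciSup hbdd A

/-- If `X n` and `Y n` differ by order at least `u n` and their total variation distance tends
to zero, then `X n` has fluctuations of order at least `u n`. -/
theorem differ_and_tv_implies_fluctuations {Ω : Type*} [MeasurableSpace Ω] (μ : Measure Ω)
    [IsProbabilityMeasure μ] (X Y : ℕ → Ω → ℝ) (u : ℕ → ℝ) (hu : ∀ n, 0 < u n)
    (hX : ∀ n, Measurable (X n)) (hY : ∀ n, Measurable (Y n))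
    (hdiff : ∃ c₁ > (0:ℝ), ∃ c₂ > (0:ℝ), ∃ N : ℕ, ∀ n ≥ N,
      c₂ ≤ (μ {ω | c₁ * u n ≤ |X n ω - Y n ω|}).toReal)
    (htv : Tendsto (fun n => dTV μ (X n) (Y n)) atTop (nhds 0)) :
    HasFluctuationsAtLeast μ X u := by
  obtain ⟨c₁, hc₁, c₂, hc₂, N, hN⟩ := hdiff
  have h2 : (0:ℝ) < c₂ / 2 := by positivity
  obtain ⟨M, hM⟩ := Filter.eventually_atTop.mp (htv.eventually_lt_const h2)
  refine ⟨c₁ / 2, by positivity, c₂ / 4, by positivity, max N M, ?_⟩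
  intro n hn a b hab hba
  have hnN : n ≥ N := le_trans (le_max_left _ _) hn
  have hnM : n ≥ M := le_trans (le_max_right _ _) hn
  set A : Set Ω := X n ⁻¹' Set.Icc a b with hA
  set B : Set Ω := Y n ⁻¹' Set.Icc a b with hB
  have hBm : MeasurableSet B := (hY n) measurableSet_Icc
  set D : Set Ω := {ω | c₁ * u n ≤ |X n ω - Y n ω|} with hD
  have hDm : MeasurableSet D := measurableSet_le measurable_const (((hX n).sub (hY n)).abs)
  have hsub : A ∩ B ⊆ Dᶜ := by
    rintro ω ⟨hωA, hωB⟩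
    simp only [hA, Set.mem_preimage, Set.mem_Icc] at hωA
    simp only [hB, Set.mem_preimage, Set.mem_Icc] at hωB
    simp only [Set.mem_compl_iff, hD, Set.mem_setOf_eq, not_le]
    have habs : |X n ω - Y n ω| ≤ b - a := by
      rw [abs_sub_le_iff]; constructor <;> linarith [hωA.1, hωA.2, hωB.1, hωB.2]
    have hlt : (c₁ / 2) * u n < c₁ * u n :=
      mul_lt_mul_of_pos_right (half_lt_self hc₁) (hu n)
    linarith
  have hadd : (μ A).toReal + (μ B).toReal = (μ (A ∪ B)).toReal + (μ (A ∩ B)).toReal := by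
    rw [← ENNReal.toReal_add (measure_ne_top μ _) (measure_ne_top μ _),
        ← ENNReal.toReal_add (measure_ne_top μ _) (measure_ne_top μ _),
        measure_union_add_inter A hBm]
  have hU : (μ (A ∪ B)).toReal ≤ 1 := by
    simpa using ENNReal.toReal_mono ENNReal.one_ne_top (prob_le_one (μ := μ) (s := A ∪ B))
  have hAB : (μ (A ∩ B)).toReal ≤ 1 - c₂ := by
    have hmono : μ (A ∩ B) ≤ μ Dᶜ := measure_mono hsub
    have hcompl : (μ Dᶜ).toReal = 1 - (μ D).toReal := by
      rw [measure_compl hDm (measure_ne_top μ D), measure_univ,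
        ENNReal.toReal_sub_of_le (prob_le_one) ENNReal.one_ne_top, ENNReal.toReal_one]
    have hD2 : c₂ ≤ (μ D).toReal := hN n hnN
    calc (μ (A ∩ B)).toReal ≤ (μ Dᶜ).toReal := ENNReal.toReal_mono (measure_ne_top μ _) hmono
      _ = 1 - (μ D).toReal := hcompl
      _ ≤ 1 - c₂ := by linarith
  have hdtv : (μ A).toReal - (μ B).toReal ≤ dTV μ (X n) (Y n) :=
    le_trans (le_abs_self _) (abs_le_dTV μ (X n) (Y n) measurableSet_Icc)
  have hd : dTV μ (X n) (Y n) < c₂ / 2 := hM n hnM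
  have hgoal : {ω | a ≤ X n ω ∧ X n ω ≤ b} = A := by
    ext ω; simp [hA, Set.mem_Icc]
  rw [hgoal]
  linarith
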